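/- arXiv:2511.06966 — 2 statements merged into one kernel-verified Lean document; each statement's English description precedes it below -/
import Mathlib

section
/- Suppose A = sum_{i=1}^p u_i^{⊗m} is a CD tensor with {u_i} spanning R^n, and B = sum_{j=1}^q v_j^{⊗m} is a CD tensor such that every diagonal entry of B is positive, i.e., for each k in [n], sum_j (v_j)_k^m > 0. Then the vectors {u_i ∘ v_j} span R^n, so A ∘ B is strongly completely decomposable. -/
theorem stmt6 (m n p q : ℕ) (hm : Even m) (hm2 : 2 ≤ m) (hn : 2 ≤ n)
    (u : Fin p → Fin n → ℝ) (v : Fin q → Fin n → ℝ)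
    (hu : Submodule.span ℝ (Set.range u) = ⊤)
    (hdiag : ∀ k : Fin n, 0 < ∑ j, v j k ^ m) :
    Submodule.span ℝ (Set.range fun ij : Fin p × Fin q => u ij.1 * v ij.2) = ⊤ := by
  set S := Submodule.span ℝ (Set.range fun ij : Fin p × Fin q => u ij.1 * v ij.2)
  rw [eq_top_iff, ← (Pi.basisFun ℝ (Fin n)).span_eq]
  rw [Submodule.span_le]
  rintro x ⟨k, rfl⟩
  simp only [Pi.basisFun_apply]
  -- find j with v j k ≠ 0
  have hj : ∃ j, v j k ≠ 0 := by
    by_contra h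
    push_neg at h
    have : ∑ j, v j k ^ m = 0 := Finset.sum_eq_zero (fun j _ => by rw [h j]; simp [pow_eq_zero_iff]; omega)
    linarith [hdiag k]
  obtain ⟨j, hj⟩ := hj
  -- the map x ↦ v j * x maps span u into S
  have hmap : ∀ x ∈ Submodule.span ℝ (Set.range u), v j * x ∈ S := by
    intro x hx
    induction hx using Submodule.span_induction with
    | mem x hx =>
      obtain ⟨i, rfl⟩ := hx
      rw [mul_comm]
      exact Submodule.subset_span ⟨(i, j), rfl⟩
    | zero => simp only [mul_zero]; exact S.zero_mem
    | add a b _ _ ha hb => rw [mul_add]; exact S.add_mem ha hb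
    | smul c a _ ha => rw [mul_smul_comm]; exact S.smul_mem c ha
  have hek : v j * Pi.single k (1:ℝ) ∈ S := by
    apply hmap
    rw [hu]; trivial
  have heq : v j * Pi.single k (1:ℝ) = v j k • (Pi.single k (1:ℝ) : Fin n → ℝ) := by
    funext i
    by_cases hik : i = k <;> simp [hik, Pi.single_apply]
  rw [heq] at hek
  have := S.smul_mem (v j k)⁻¹ hek
  rwa [smul_smul, inv_mul_cancel₀ hj, one_smul] at this
end

section
/- Let the order-4 dimension-2 symmetric tensor A be defined so that its quartic form is A x^4 = (x_1 + x_2)^4 + (x_1 + 1000 x_2)^4 − 0.0001 (x_1 + 0.0001 x_2)^4. Then A x^4 > 0 for all nonzero x ∈ R², i.e., A is positive definite. -/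
theorem stmt13 (x : Fin 2 → ℝ) (hx : x ≠ 0) :
    0 < (x 0 + x 1) ^ 4 + (x 0 + 1000 * x 1) ^ 4
        - 0.0001 * (x 0 + 0.0001 * x 1) ^ 4 := by
  set a := x 0 with ha
  set b := x 1 with hb
  have h : a ≠ 0 ∨ b ≠ 0 := by
    by_contra h
    push_neg at h
    apply hx
    funext i
    fin_cases i <;> simp [h.1, h.2, ← ha, ← hb]
  have hpq : 0 < (a + b) ^ 2 + (a + 1000 * b) ^ 2 := by
    rcases h with h | h <;> [skip; skip] <;>
    · rcases lt_or_ge 0 ((a + b) ^ 2 + (a + 1000 * b) ^ 2) with h' | h'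
      · exact h'
      · exfalso
        have h1 : a + b = 0 := by nlinarith [sq_nonneg (a+b), sq_nonneg (a+1000*b)]
        have h2 : a + 1000 * b = 0 := by nlinarith [sq_nonneg (a+b), sq_nonneg (a+1000*b)]
        apply h; nlinarith
  have hbound : 0.0001 * (a + 0.0001 * b) ^ 4 ≤ 0.5 * ((a + b) ^ 4 + (a + 1000 * b) ^ 4) := by
    nlinarith [sq_nonneg ((a+b)^2 - (a+1000*b)^2), sq_nonneg ((a+b)^2 + (a+1000*b)^2), sq_nonneg ((a+b)*(a+1000*b)), sq_nonneg ((a+b)^2), sq_nonneg ((a+1000*b)^2), sq_nonneg (a+0.0001*b)]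
  nlinarith [pow_pos (show (0:ℝ) < (a+b)^2 + (a+1000*b)^2 from hpq) 2, sq_nonneg ((a+b)*(a+1000*b)), sq_nonneg ((a+b)^2 - (a+1000*b)^2)]
end
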